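/- The exponent 3 in the integrality statement 'D_n³·â_n ∈ ℤ' cannot be improved: for all positive integers b, b_0 and C there exists an integer n ≥ 0 such that D_{bn+b_0}² · C^{n+1} · â_n is not an integer, where â_n = Σ_{k=0}^n (n choose k)²((n+k) choose k)² · ( Σ_{m=1}^n 1/m³ + Σ_{m=1}^k (−1)^{m−1} / (2m³ · (n choose m) · ((n+m) choose n)) ). -/

import Mathlib

/-- `D n = lcm {1, 2, …, n}`, with `D 0 = 1`. -/
def D (n : ℕ) : ℕ := (Finset.Icc 1 n).lcm id

/-- The second Apéry sequence
`âₙ = Σ_{k=0}^n (n choose k)²((n+k) choose k)²·(Σ_{m=1}^n 1/m³ +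
Σ_{m=1}^k (−1)^{m−1}/(2m³ (n choose m)((n+m) choose n)))`. -/
def aperyHat (n : ℕ) : ℚ :=
  ∑ k ∈ Finset.range (n + 1), ((n.choose k : ℚ)) ^ 2 * (((n + k).choose k : ℚ)) ^ 2 *
    ((∑ m ∈ Finset.Icc 1 n, 1 / (m : ℚ) ^ 3) +
     ∑ m ∈ Finset.Icc 1 k,
       (-1 : ℚ) ^ (m - 1) / (2 * (m : ℚ) ^ 3 * (n.choose m : ℚ) * ((n + m).choose n : ℚ)))

namespace AperySharp

/- ### lcm facts -/

lemma lcm_fact {p : ℕ} (e : ℕ) (t : Finset ℕ)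
    (h0 : ∀ x ∈ t, x ≠ 0) (h : ∀ x ∈ t, x.factorization p ≤ e) :
    t.lcm id ≠ 0 ∧ (t.lcm id).factorization p ≤ e := by
  classical
  induction t using Finset.induction_on with
  | empty => simp
  | @insert a t ha ih =>
      rw [Finset.lcm_insert, id, lcm_eq_nat_lcm]
      have hane : a ≠ 0 := h0 a (by simp)
      obtain ⟨hne, hle⟩ := ih (fun x hx => h0 x (by simp [hx])) (fun x hx => h x (by simp [hx]))
      refine ⟨Nat.lcm_ne_zero hane hne, ?_⟩
      rw [Nat.factorization_lcm hane hne, Finsupp.sup_apply]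
      exact sup_le (h a (by simp)) hle

/- ### congruences mod p -/

lemma choose_zero_mod {p k : ℕ} (hp : p.Prime) (hk : k ≠ 0) (hkp : k < p) :
    ((p.choose k : ℕ) : ZMod p) = 0 :=
  (ZMod.natCast_eq_zero_iff _ _).2 (hp.dvd_choose_self hk hkp)

lemma Q_cong {p : ℕ} (hp : p.Prime) : (((2 * p).choose p : ℕ) : ZMod p) = 2 := by
  have h := Nat.add_choose_eq p p p
  rw [two_mul, h]
  push_cast
  rw [Finset.Nat.sum_antidiagonal_eq_sum_range_succ_mk, Finset.sum_range_succ]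
  have hmid : ∑ k ∈ Finset.range p, ((p.choose k : ZMod p) * (p.choose (p - k) : ZMod p))
      = 1 := by
    rw [Finset.sum_eq_single_of_mem 0 (Finset.mem_range.2 hp.pos)]
    · simp
    · intro k hk hk0
      rw [choose_zero_mod hp hk0 (Finset.mem_range.1 hk), zero_mul]
  rw [hmid]
  norm_num

lemma S_cong {p : ℕ} (hp : p.Prime) :
    (∑ k ∈ Finset.range (p + 1), ((p.choose k : ZMod p))^2 * (((p + k).choose k : ZMod p))^2) = 5 := by
  rw [Finset.sum_range_succ]
  have hmid : ∑ k ∈ Finset.range p, ((p.choose k : ZMod p)^2 * ((p + k).choose k : ZMod p)^2)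
      = 1 := by
    rw [Finset.sum_eq_single_of_mem 0 (Finset.mem_range.2 hp.pos)]
    · simp
    · intro k hk hk0
      rw [choose_zero_mod hp hk0 (Finset.mem_range.1 hk)]
      ring
  have h2 : ((p + p).choose p : ZMod p) = 2 := by rw [← two_mul]; exact Q_cong hp
  rw [hmid, Nat.choose_self, h2]
  norm_num

lemma not_dvd_key {p : ℕ} (hp : p.Prime) (hp5 : 5 ≤ p) :
    ¬ p ∣ (2 * (∑ k ∈ Finset.range (p + 1), (p.choose k)^2 * ((p + k).choose k)^2)
        + (2 * p).choose p) := by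
  intro hdvd
  have : ((2 * (∑ k ∈ Finset.range (p + 1), (p.choose k)^2 * ((p + k).choose k)^2)
        + (2 * p).choose p : ℕ) : ZMod p) = 0 := (ZMod.natCast_eq_zero_iff _ _).2 hdvd
  push_cast at this
  rw [S_cong hp, Q_cong hp] at this
  have h12 : ((12 : ℕ) : ZMod p) = 0 := by push_cast; linear_combination this
  have hd : p ∣ 12 := (ZMod.natCast_eq_zero_iff _ _).1 h12
  have : p ∣ 4 * 3 := by norm_num at hd ⊢; exact hd
  rcases (Nat.Prime.dvd_mul hp).1 this with h | h
  · have h4 : p ∣ 2 ^ 2 := by norm_num; exact h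
    have := Nat.le_of_dvd (by norm_num) (hp.dvd_of_dvd_pow h4); omega
  · have := Nat.le_of_dvd (by norm_num) h; omega

/- ### p-adic norm estimates -/

section norms
variable {p : ℕ} [hp : Fact p.Prime]

omit hp in
lemma pnorm_nat (x : ℕ) (hx : x ≠ 0) :
    padicNorm p (x : ℚ) = (p : ℚ) ^ (-(padicValNat p x : ℤ)) := by
  rw [padicNorm.eq_zpow_of_nonzero (by exact_mod_cast hx), padicValRat.of_nat]

lemma pnorm_nat_ge (x : ℕ) (hx : x ≠ 0) {e : ℕ} (h : padicValNat p x ≤ e) :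
    ((p : ℚ) ^ e)⁻¹ ≤ padicNorm p (x : ℚ) := by
  rw [pnorm_nat x hx, ← zpow_natCast, ← zpow_neg]
  apply zpow_le_zpow_right₀ (by exact_mod_cast hp.out.one_lt.le)
  omega

lemma pnorm_p_pow (n : ℕ) : padicNorm p ((p : ℚ) ^ n) = ((p : ℚ) ^ n)⁻¹ := by
  rw [IsAbsoluteValue.abv_pow (padicNorm p), padicNorm.padicNorm_p_of_prime, inv_pow]

lemma val_choose_le {n k : ℕ} (hn : n ≠ 0) (hn2 : n < p ^ 2) :
    padicValNat p (n.choose k) ≤ 1 := by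
  have h1 := Nat.factorization_choose_le_log (p := p) (n := n) (k := k)
  have hlog : Nat.log p n ≤ 1 := Nat.lt_succ_iff.mp (Nat.log_lt_of_lt_pow hn hn2)
  rw [Nat.factorization_def _ hp.out] at h1
  omega

lemma pnorm_term_le {m : ℕ} (hp2 : 2 < p) (hm1 : 1 ≤ m) (hmp : m < p) :
    padicNorm p ((p : ℚ) ^ 3 * ((-1 : ℚ) ^ (m - 1) /
      (2 * (m : ℚ) ^ 3 * (p.choose m : ℚ) * ((p + m).choose p : ℚ)))) ≤ (p : ℚ)⁻¹ := by
  have hp1 : (1 : ℚ) < p := by exact_mod_cast hp.out.one_lt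
  have hp0 : (0 : ℚ) < p := by positivity
  have hchoose1 : (p.choose m) ≠ 0 := Nat.choose_pos (le_of_lt hmp) |>.ne'
  have hchoose2 : ((p + m).choose p) ≠ 0 := (Nat.choose_pos (Nat.le_add_right p m)).ne'
  have hv1 : padicValNat p (p.choose m) ≤ 1 :=
    val_choose_le hp.out.pos.ne' (by nlinarith [hp.out.two_le, sq_nonneg p] : p < p ^ 2)
  have hv2 : padicValNat p ((p + m).choose p) ≤ 1 := by
    apply val_choose_le (by positivity)
    nlinarith [hp.out.two_le]
  have hn1 : padicNorm p ((-1 : ℚ) ^ (m - 1)) = 1 := by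
    rcases Nat.even_or_odd (m - 1) with h | h
    · rw [h.neg_one_pow]; exact padicNorm.one
    · rw [h.neg_one_pow, padicNorm.neg]; exact padicNorm.one
  have hn2' : padicNorm p (2 : ℚ) = 1 := by
    have : ((2 : ℕ) : ℚ) = (2 : ℚ) := by norm_num
    rw [← this, padicNorm.nat_eq_one_iff]
    intro hd
    have := Nat.le_of_dvd (by norm_num) hd
    omega
  have hnm : padicNorm p ((m : ℚ) ^ 3) = 1 := by
    have h1 : padicNorm p ((m : ℕ) : ℚ) = 1 := by
      rw [padicNorm.nat_eq_one_iff]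
      intro hd; have := Nat.le_of_dvd (by omega) hd; omega
    rw [IsAbsoluteValue.abv_pow (padicNorm p), h1, one_pow]
  have hb1 : ((p : ℚ) ^ 1)⁻¹ ≤ padicNorm p ((p.choose m : ℕ) : ℚ) :=
    pnorm_nat_ge _ hchoose1 hv1
  have hb2 : ((p : ℚ) ^ 1)⁻¹ ≤ padicNorm p (((p + m).choose p : ℕ) : ℚ) :=
    pnorm_nat_ge _ hchoose2 hv2
  rw [padicNorm.mul, padicNorm.div, pnorm_p_pow, padicNorm.mul, padicNorm.mul, padicNorm.mul,
    hn1, hn2', hnm]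
  have hpos1 : 0 < padicNorm p ((p.choose m : ℕ) : ℚ) := lt_of_lt_of_le (by positivity) hb1
  have hpos2 : 0 < padicNorm p (((p + m).choose p : ℕ) : ℚ) := lt_of_lt_of_le (by positivity) hb2
  rw [div_eq_mul_inv, one_mul, mul_inv]
  have e1 : (padicNorm p ((p.choose m : ℕ) : ℚ))⁻¹ ≤ (p : ℚ) := by
    rw [inv_le_comm₀ hpos1 hp0]
    simpa using hb1
  have e2 : (padicNorm p (((p + m).choose p : ℕ) : ℚ))⁻¹ ≤ (p : ℚ) := by
    rw [inv_le_comm₀ hpos2 hp0]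
    simpa using hb2
  calc ((p:ℚ)^3)⁻¹ * ((1 * 1 * padicNorm p ((p.choose m : ℕ) : ℚ))⁻¹ *
        (padicNorm p (((p + m).choose p : ℕ) : ℚ))⁻¹)
      ≤ ((p:ℚ)^3)⁻¹ * ((p : ℚ) * (p : ℚ)) := by
        rw [one_mul, one_mul]
        apply mul_le_mul_of_nonneg_left _ (by positivity)
        exact mul_le_mul e1 e2 (by positivity) (by positivity)
    _ = (p : ℚ)⁻¹ := by field_simp


lemma pnorm_aperyHat (hp5 : 5 ≤ p) : padicNorm p (aperyHat p) = (p : ℚ) ^ 3 := by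
  have hp1 : (1 : ℚ) < p := by exact_mod_cast hp.out.one_lt
  have hpQ : (0 : ℚ) < p := by positivity
  have hp3 : ((p : ℚ) ^ 3) ≠ 0 := by positivity
  set H : ℚ := ∑ m ∈ Finset.Icc 1 p, 1 / (m : ℚ) ^ 3 with hH
  set T : ℕ → ℚ := fun k => ∑ m ∈ Finset.Icc 1 k, (-1 : ℚ) ^ (m - 1) /
      (2 * (m : ℚ) ^ 3 * (p.choose m : ℚ) * ((p + m).choose p : ℚ)) with hT
  set c : ℕ → ℚ := fun k => (p.choose k : ℚ) ^ 2 * ((p + k).choose k : ℚ) ^ 2 with hc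
  have haH : aperyHat p = ∑ k ∈ Finset.range (p + 1), c k * (H + T k) := by
    rw [aperyHat]
  set Snat : ℕ := ∑ k ∈ Finset.range (p + 1), (p.choose k) ^ 2 * ((p + k).choose k) ^ 2 with hS
  set Qn : ℕ := (2 * p).choose p with hQn
  have hQ0 : ((Qn : ℚ)) ≠ 0 := by
    rw [hQn]; exact_mod_cast (Nat.choose_pos (by omega : p ≤ 2 * p)).ne'
  have hIccp : ∀ q : ℕ, 1 ≤ q → Finset.Icc 1 q = insert q (Finset.Icc 1 (q - 1)) := by
    intro q hq; ext x; simp only [Finset.mem_Icc, Finset.mem_insert]; omega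
  have hnotmem : ∀ q : ℕ, q ∉ Finset.Icc 1 (q - 1) := by
    intro q; simp only [Finset.mem_Icc]; omega
  have hmcube : ∀ m : ℕ, 1 ≤ m → m < p → padicNorm p ((m : ℚ) ^ 3) = 1 := by
    intro m h1 h2
    have hm1 : padicNorm p ((m : ℕ) : ℚ) = 1 := by
      rw [padicNorm.nat_eq_one_iff]
      intro hd; have := Nat.le_of_dvd (by omega) hd; omega
    rw [IsAbsoluteValue.abv_pow (padicNorm p), hm1, one_pow]
  -- Claim A
  have claimA : padicNorm p ((p : ℚ) ^ 3 * H - 1) ≤ ((p : ℚ) ^ 3)⁻¹ := by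
    have heq : (p : ℚ) ^ 3 * H - 1 = ∑ m ∈ Finset.Icc 1 (p - 1), (p : ℚ) ^ 3 * (1 / (m : ℚ) ^ 3) := by
      rw [hH, hIccp p (by omega), Finset.sum_insert (hnotmem p), mul_add, Finset.mul_sum]
      field_simp
      ring
    rw [heq]
    apply padicNorm.sum_le' _ (by positivity)
    intro m hm
    simp only [Finset.mem_Icc] at hm
    rw [padicNorm.mul, pnorm_p_pow, padicNorm.div, padicNorm.one, hmcube m hm.1 (by omega)]
    norm_num
  -- Claim : small part of T
  have hTsmall : ∀ j : ℕ, j < p → padicNorm p ((p : ℚ) ^ 3 * T j) ≤ (p : ℚ)⁻¹ := by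
    intro j hj
    simp only [hT]
    rw [Finset.mul_sum]
    apply padicNorm.sum_le' _ (by positivity)
    intro m hm
    simp only [Finset.mem_Icc] at hm
    exact pnorm_term_le (by omega) hm.1 (by omega)
  -- Claim B
  have claimB : ∀ k ∈ Finset.range (p + 1),
      padicNorm p ((p : ℚ) ^ 3 * T k - (if k = p then (2 * (Qn : ℚ))⁻¹ else 0)) ≤ (p : ℚ)⁻¹ := by
    intro k hk
    rcases eq_or_ne k p with hkp | hne
    · rw [hkp, if_pos rfl]
      have hsplit : T p = T (p - 1) +
          ((-1 : ℚ) ^ (p - 1) / (2 * (p : ℚ) ^ 3 * (p.choose p : ℚ) * ((p + p).choose p : ℚ))) := by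
        simp only [hT]
        rw [hIccp p (by omega), Finset.sum_insert (hnotmem p)]
        ring
      have hneg : (-1 : ℚ) ^ (p - 1) = 1 := by
        have hodd : Odd p := hp.out.odd_of_ne_two (by omega)
        exact (Nat.Odd.sub_odd hodd odd_one).neg_one_pow
      have h2p : (((p + p).choose p : ℕ) : ℚ) = ((Qn : ℕ) : ℚ) := by
        rw [hQn, two_mul]
      have heq : (p : ℚ) ^ 3 * T p - (2 * (Qn : ℚ))⁻¹ = (p : ℚ) ^ 3 * T (p - 1) := by
        rw [hsplit, hneg, Nat.choose_self, h2p]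
        push_cast
        field_simp
        ring
      rw [heq]; exact hTsmall _ (by omega)
    · rw [if_neg hne, sub_zero]
      exact hTsmall k (by have := Finset.mem_range.1 hk; omega)
  -- key algebraic identity
  have e1 : ∑ k ∈ Finset.range (p + 1), c k * (if k = p then (2 * (Qn : ℚ))⁻¹ else 0)
      = (Qn : ℚ) / 2 := by
    simp only [mul_ite, mul_zero]
    rw [Finset.sum_ite_eq' (Finset.range (p + 1)) p]
    rw [if_pos (Finset.mem_range.2 (by omega))]
    have hcp : c p = (Qn : ℚ) ^ 2 := by
      rw [hc, hQn]
      simp only [Nat.choose_self, Nat.cast_one, one_pow, one_mul, two_mul]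
    rw [hcp]
    field_simp
  have e2 : ∑ k ∈ Finset.range (p + 1), c k = ((Snat : ℕ) : ℚ) := by
    rw [hS, hc]
    push_cast
    rfl
  have hkey : (p : ℚ) ^ 3 * aperyHat p - ((2 * Snat + Qn : ℕ) : ℚ) / 2
      = ∑ k ∈ Finset.range (p + 1), c k * (((p : ℚ) ^ 3 * H - 1) +
          ((p : ℚ) ^ 3 * T k - (if k = p then (2 * (Qn : ℚ))⁻¹ else 0))) := by
    have expand : ∀ k ∈ Finset.range (p + 1), c k * (((p : ℚ) ^ 3 * H - 1) +
        ((p : ℚ) ^ 3 * T k - (if k = p then (2 * (Qn : ℚ))⁻¹ else 0)))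
        = (p : ℚ) ^ 3 * (c k * (H + T k)) - c k
            - c k * (if k = p then (2 * (Qn : ℚ))⁻¹ else 0) := by
      intro k _; ring
    rw [Finset.sum_congr rfl expand, Finset.sum_sub_distrib, Finset.sum_sub_distrib,
      ← Finset.mul_sum, e1, e2, haH]
    push_cast
    ring
  -- norm bound on the remainder
  have hRle : padicNorm p ((p : ℚ) ^ 3 * aperyHat p - ((2 * Snat + Qn : ℕ) : ℚ) / 2)
      ≤ (p : ℚ)⁻¹ := by
    rw [hkey]
    apply padicNorm.sum_le' _ (by positivity)
    intro k hk
    rw [padicNorm.mul]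
    have hck : padicNorm p (c k) ≤ 1 := by
      have hcast : c k = (((p.choose k) ^ 2 * ((p + k).choose k) ^ 2 : ℕ) : ℚ) := by
        rw [hc]; push_cast; rfl
      rw [hcast]; exact padicNorm.of_nat _
    have h31 : ((p : ℚ) ^ 3)⁻¹ ≤ (p : ℚ)⁻¹ := by
      rw [inv_le_inv₀ (by positivity) (by positivity)]
      nlinarith [hp1, hpQ, mul_pos hpQ hpQ]
    have hinner : padicNorm p (((p : ℚ) ^ 3 * H - 1) +
        ((p : ℚ) ^ 3 * T k - (if k = p then (2 * (Qn : ℚ))⁻¹ else 0))) ≤ (p : ℚ)⁻¹ :=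
      le_trans padicNorm.nonarchimedean (max_le (le_trans claimA h31) (claimB k hk))
    calc padicNorm p (c k) * padicNorm p _ ≤ 1 * (p : ℚ)⁻¹ :=
          mul_le_mul hck hinner (padicNorm.nonneg _) zero_le_one
      _ = (p : ℚ)⁻¹ := one_mul _
  -- norm of the main term
  have hM : padicNorm p (((2 * Snat + Qn : ℕ) : ℚ) / 2) = 1 := by
    rw [padicNorm.div]
    have hnum : padicNorm p ((2 * Snat + Qn : ℕ) : ℚ) = 1 :=
      (padicNorm.nat_eq_one_iff _).2 (not_dvd_key hp.out hp5)
    have h2 : padicNorm p (2 : ℚ) = 1 := by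
      have hcast : ((2 : ℕ) : ℚ) = (2 : ℚ) := by norm_num
      rw [← hcast, padicNorm.nat_eq_one_iff]
      intro hd; have := Nat.le_of_dvd (by norm_num) hd; omega
    rw [hnum, h2]; norm_num
  have hlt1 : (p : ℚ)⁻¹ < 1 := by
    rw [inv_lt_one₀ hpQ]; exact hp1
  have hmain : padicNorm p ((p : ℚ) ^ 3 * aperyHat p) = 1 := by
    have hx : (p : ℚ) ^ 3 * aperyHat p = ((2 * Snat + Qn : ℕ) : ℚ) / 2 +
        ((p : ℚ) ^ 3 * aperyHat p - ((2 * Snat + Qn : ℕ) : ℚ) / 2) := by ring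
    rw [hx, padicNorm.add_eq_max_of_ne, hM]
    · exact max_eq_left (le_trans hRle hlt1.le)
    · rw [hM]
      exact fun hcontra => absurd (hcontra ▸ hRle) (by simpa using hlt1)
  rw [padicNorm.mul, pnorm_p_pow, inv_mul_eq_one₀ (by positivity)] at hmain
  exact hmain.symm

end norms

end AperySharp

/-- The exponent `3` in `D n ³ · âₙ ∈ ℤ` cannot be improved to `2`: for all positive
integers `b`, `b₀`, `C` there is an `n` with `D (b*n+b₀)² · C^(n+1) · âₙ ∉ ℤ`. -/
theorem aperyHat_exponent_sharp (b b₀ C : ℕ) (hb : 0 < b) (hb₀ : 0 < b₀) (hC : 0 < C) :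
    ∃ n : ℕ, ¬ ∃ m : ℤ, (D (b * n + b₀) : ℚ) ^ 2 * (C : ℚ) ^ (n + 1) * aperyHat n = (m : ℚ) := by
  obtain ⟨p, hple, hp⟩ := Nat.exists_infinite_primes (b + b₀ + C + 5)
  haveI hpf : Fact p.Prime := ⟨hp⟩
  refine ⟨p, ?_⟩
  rintro ⟨m, hm⟩
  set N := b * p + b₀ with hN
  have hNge : p ≤ N := by
    have : p ≤ b * p := Nat.le_mul_of_pos_left p hb
    omega
  have hNlt : N < p ^ 2 := by
    have h1 : N < (b + 1) * p := by rw [hN]; nlinarith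
    calc N < (b + 1) * p := h1
      _ ≤ p * p := Nat.mul_le_mul_right p (by omega)
      _ = p ^ 2 := (sq p).symm
  have hmem : ∀ x ∈ Finset.Icc 1 N, x ≠ 0 := by
    intro x hx; simp only [Finset.mem_Icc] at hx; omega
  have hfac : ∀ x ∈ Finset.Icc 1 N, x.factorization p ≤ 1 := by
    intro x hx
    simp only [Finset.mem_Icc] at hx
    by_contra hgt
    push_neg at hgt
    have h2 : p ^ 2 ∣ x := (Nat.Prime.pow_dvd_iff_le_factorization hp (by omega)).2 hgt
    have := Nat.le_of_dvd (by omega) h2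
    omega
  obtain ⟨hD0, hDfac⟩ := AperySharp.lcm_fact 1 _ hmem hfac
  have hD0' : D N ≠ 0 := hD0
  have hdvd : p ∣ D N := by
    have hpN : p ∈ Finset.Icc 1 N := by simp only [Finset.mem_Icc]; omega
    have := Finset.dvd_lcm (f := id) hpN
    simpa [D] using this
  have hval : padicValNat p (D N) = 1 := by
    have hge : 1 ≤ padicValNat p (D N) := by
      rw [← padicValNat_dvd_iff_le hD0']
      simpa using hdvd
    have hle : padicValNat p (D N) ≤ 1 := by
      rw [← Nat.factorization_def _ hp]
      exact hDfac
    omega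
  have hDnorm : padicNorm p ((D N : ℕ) : ℚ) = (p : ℚ)⁻¹ := by
    rw [AperySharp.pnorm_nat _ hD0', hval]
    norm_num
  have hCnorm : padicNorm p ((C : ℕ) : ℚ) = 1 :=
    (padicNorm.nat_eq_one_iff _).2 (fun hd => by have := Nat.le_of_dvd hC hd; omega)
  have h5 : 5 ≤ p := by omega
  have hA := AperySharp.pnorm_aperyHat (p := p) h5
  have hnorm := congrArg (padicNorm p) hm
  rw [padicNorm.mul, padicNorm.mul, IsAbsoluteValue.abv_pow (padicNorm p),
    IsAbsoluteValue.abv_pow (padicNorm p), hDnorm, hCnorm, hA, one_pow] at hnorm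
  have hle1 : padicNorm p ((m : ℤ) : ℚ) ≤ 1 := padicNorm.of_int m
  rw [← hnorm] at hle1
  have hp1 : (1 : ℚ) < p := by exact_mod_cast hp.one_lt
  have hpQ : (0 : ℚ) < p := by positivity
  have hcomp : ((p : ℚ)⁻¹) ^ 2 * 1 * (p : ℚ) ^ 3 = p := by
    field_simp
  rw [hcomp] at hle1
  linarith
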